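/- Let G be a group with a fixed finite generating set and H ≤ G a subgroup. Then for every n ≥ 0 the following inequalities hold: #B_{2n}^G(e) ≥ #B_n^{G/H} · #(B_n^G(e) ∩ H) and #B_n^G(e) ≤ #B_n^{G/H} · #(B_{2n}^G(e) ∩ H). -/

import Mathlib

open Filter Set Topology MeasureTheory
open scoped ENNReal

namespace NilpotentCritReg

variable {G : Type*} [Group G]

/-- The ball of radius `n` in `G` with respect to the finite set `S`:
elements expressible as products of at most `n` elements of `S ∪ S⁻¹`. -/
def wordBall (S : Finset G) (n : ℕ) : Set G :=
  {g | ∃ l : List G, l.length ≤ n ∧ (∀ x ∈ l, x ∈ S ∨ x⁻¹ ∈ S) ∧ l.prod = g}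

/-- The ball of radius `n` in the Schreier graph of the left coset space `G/H`:
the image of the word ball in `G ⧸ H`. -/
def schreierBall (S : Finset G) (H : Subgroup G) (n : ℕ) : Set (G ⧸ H) :=
  (fun g => (QuotientGroup.mk g : G ⧸ H)) '' wordBall S n

/-- `gr(G/H) = d`: the growth rate of the Schreier graph `G/H` equals `d`. -/
def HasSchreierGrowth (S : Finset G) (H : Subgroup G) (d : ℝ) : Prop :=
  Tendsto (fun n : ℕ => Real.log ((schreierBall S H n).ncard) / Real.log n)
    atTop (𝓝 d)

/-- `gr_G(H) = d`: the relative growth of the subgroup `H` in `G` equals `d`. -/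
def HasRelativeGrowth (S : Finset G) (H : Subgroup G) (d : ℝ) : Prop :=
  Tendsto (fun n : ℕ => Real.log ((wordBall S n ∩ (H : Set G)).ncard) / Real.log n)
    atTop (𝓝 d)

/-- `K` is a stabilizer subgroup of the central element `c`. -/
def IsStabilizerSubgroup (c : G) (K : Subgroup G) : Prop :=
  c ∈ K ∧
  (∃ H : Subgroup G, H ≤ K ∧
      (∃ ψ : ↥K →* Multiplicative ℤ, Function.Surjective ψ ∧ ψ.ker = H.subgroupOf K) ∧
      H ⊓ Subgroup.zpowers c = ⊥) ∧
  (∃ n : ℕ, ∃ chain : Fin (n + 1) → Subgroup G,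
      chain 0 = ⊤ ∧ chain (Fin.last n) = K ∧
      ∀ i : Fin n, chain i.succ ≤ chain i.castSucc ∧
        ∃ ψ : ↥(chain i.castSucc) →* Multiplicative ℤ, Function.Surjective ψ ∧
          ψ.ker = (chain i.succ).subgroupOf (chain i.castSucc))

/-- An action of `G` on a subset `M ⊆ ℝ` by orientation-preserving bijections. -/
structure IntervalAction (G : Type*) [Group G] (M : Set ℝ) where
  toFun : G → ℝ → ℝ
  bijOn : ∀ g : G, Set.BijOn (toFun g) M M
  strictMonoOn : ∀ g : G, StrictMonoOn (toFun g) M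
  map_one : Set.EqOn (toFun 1) id M
  map_mul : ∀ g h : G, ∀ x ∈ M, toFun (g * h) x = toFun g (toFun h x)

namespace IntervalAction

variable {M : Set ℝ}

/-- The action is by `C¹` diffeomorphisms (continuous positive derivative on `M`). -/
def IsC1 (φ : IntervalAction G M) : Prop :=
  ∀ g : G, ∃ d : ℝ → ℝ, ContinuousOn d M ∧
    ∀ x ∈ M, 0 < d x ∧ HasDerivWithinAt (φ.toFun g) (d x) M x

/-- The action is by `C^{1+α}` diffeomorphisms: `C¹` with derivative `α`-Hölder on
every compact subset of `M` (for compact `M` this is global `α`-Hölder continuity). -/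
def IsC1Holder (φ : IntervalAction G M) (α : ℝ) : Prop :=
  ∀ g : G, ∃ d : ℝ → ℝ, ContinuousOn d M ∧
    (∀ x ∈ M, 0 < d x ∧ HasDerivWithinAt (φ.toFun g) (d x) M x) ∧
    ∀ K : Set ℝ, K ⊆ M → IsCompact K →
      ∃ C : ℝ, ∀ x ∈ K, ∀ y ∈ K, |d x - d y| ≤ C * |x - y| ^ α

/-- Faithfulness of an interval action. -/
def Faithful (φ : IntervalAction G M) : Prop :=
  ∀ g : G, Set.EqOn (φ.toFun g) id M → g = 1

end IntervalAction

/-- An action of `G` on the circle `S¹ = ℝ/ℤ` by orientation-preserving homeomorphisms,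
encoded by lifts to `ℝ` commuting with the unit translation; the group laws hold up to
integer translations. -/
structure CircleAction (G : Type*) [Group G] where
  lift : G → ℝ → ℝ
  strictMono : ∀ g : G, StrictMono (lift g)
  surjective : ∀ g : G, Function.Surjective (lift g)
  lift_add_one : ∀ (g : G) (x : ℝ), lift g (x + 1) = lift g x + 1
  lift_one : ∃ k : ℤ, ∀ x : ℝ, lift 1 x = x + k
  lift_mul : ∀ g h : G, ∃ k : ℤ, ∀ x : ℝ, lift (g * h) x = lift g (lift h x) + k

namespace CircleAction

/-- `g` acts as the identity on the circle. -/
def IsIdOn (φ : CircleAction G) (g : G) : Prop :=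
  ∃ k : ℤ, ∀ x : ℝ, φ.lift g x = x + k

/-- Faithfulness of a circle action. -/
def Faithful (φ : CircleAction G) : Prop :=
  ∀ g : G, φ.IsIdOn g → g = 1

/-- The circle action is by `C¹` diffeomorphisms. -/
def IsC1 (φ : CircleAction G) : Prop :=
  ∀ g : G, ∃ d : ℝ → ℝ, Continuous d ∧ ∀ x : ℝ, 0 < d x ∧ HasDerivAt (φ.lift g) (d x) x

/-- The circle action is by `C^{1+α}` diffeomorphisms. -/
def IsC1Holder (φ : CircleAction G) (α : ℝ) : Prop :=
  ∀ g : G, ∃ d : ℝ → ℝ, Continuous d ∧ (∀ x : ℝ, 0 < d x ∧ HasDerivAt (φ.lift g) (d x) x) ∧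
    ∃ C : ℝ, ∀ x y : ℝ, |d x - d y| ≤ C * |x - y| ^ α

/-- The set of lifts of fixed points of `g` on the circle. -/
def FixLift (φ : CircleAction G) (g : G) : Set ℝ :=
  {x : ℝ | ∃ k : ℤ, φ.lift g x = x + k}

/-- `J ⊆ ℝ` is (the lift of) a support interval of `g` on the circle: the closure of a
connected component of the complement of the fixed-point set. -/
def IsSupportLift (φ : CircleAction G) (g : G) (J : Set ℝ) : Prop :=
  ∃ x : ℝ, x ∉ φ.FixLift g ∧ J = closure (connectedComponentIn (φ.FixLift g)ᶜ x)

/-- `g` stabilizes the (projection to the circle of the) interval `J`. -/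
def Stabilizes (φ : CircleAction G) (g : G) (J : Set ℝ) : Prop :=
  ∃ k : ℤ, φ.lift g '' J = (fun x => x + (k : ℝ)) '' J

end CircleAction

/-- Critical regularity of a class of interval actions, as an element of `[1,∞]`. -/
noncomputable def critInterval (G : Type*) [Group G] (M : Set ℝ)
    (P : IntervalAction G M → Prop) : ℝ≥0∞ :=
  sSup (insert 1 {x : ℝ≥0∞ | ∃ α : ℝ, 0 < α ∧ α < 1 ∧ x = ENNReal.ofReal (1 + α) ∧
    ∃ φ : IntervalAction G M, P φ ∧ φ.IsC1Holder α})

/-- Critical regularity of a class of circle actions, as an element of `[1,∞]`. -/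
noncomputable def critCircle (G : Type*) [Group G]
    (P : CircleAction G → Prop) : ℝ≥0∞ :=
  sSup (insert 1 {x : ℝ≥0∞ | ∃ α : ℝ, 0 < α ∧ α < 1 ∧ x = ENNReal.ofReal (1 + α) ∧
    ∃ φ : CircleAction G, P φ ∧ φ.IsC1Holder α})

/-- The value `1 + 1/d`, with the convention that it is `+∞` when `d = 0`. -/
noncomputable def critFormula (d : ℕ) : ℝ≥0∞ :=
  if d = 0 then ⊤ else ENNReal.ofReal (1 + 1 / d)

/-- `J` is a support interval of `f` in `M`: the closure (in `M`) of a connected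
component of `M ∖ Fix(f)`. -/
def IsSupportIntervalIn (f : ℝ → ℝ) (M J : Set ℝ) : Prop :=
  ∃ x ∈ M, f x ≠ x ∧ J = M ∩ closure (connectedComponentIn {y ∈ M | f y ≠ y} x)

/-- The left-ordered partial products `g_n = ω_{n-1} ⋯ ω_1 ω_0` of a sequence. -/
def leftProd (ω : ℕ → G) : ℕ → G
  | 0 => 1
  | n + 1 => ω n * leftProd ω n

/-- `S ∪ S⁻¹ ∪ {1}` as a finite set. -/
def symmGens [DecidableEq G] (S : Finset G) : Finset G :=
  insert 1 (S ∪ S.image (·⁻¹))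

instance lcs_subgroupOf_normal (G : Type*) [Group G] (j : ℕ) :
    (((⊤ : Subgroup G).lowerCentralSeries (j + 1)).subgroupOf ((⊤ : Subgroup G).lowerCentralSeries j)).Normal :=
  Subgroup.Normal.subgroupOf inferInstance _

/-- The quotient `G_j/G_{j+1}` of consecutive terms of the lower central series
(with 0-based indexing: `lcsQuot G 0 = G/[G,G]`). -/
abbrev lcsQuot (G : Type*) [Group G] (j : ℕ) :=
  ↥((⊤ : Subgroup G).lowerCentralSeries j) ⧸
    (((⊤ : Subgroup G).lowerCentralSeries (j + 1)).subgroupOf ((⊤ : Subgroup G).lowerCentralSeries j))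

/-- A group has torsion-free rank `r` if it admits a finite normal subgroup with
quotient free abelian of rank `r` (for finitely generated abelian groups this is the
usual torsion-free rank). -/
def HasTorsionFreeRank (A : Type*) [Group A] (r : ℕ) : Prop :=
  ∃ ψ : A →* Multiplicative (Fin r → ℤ), Function.Surjective ψ ∧ Finite ψ.ker

/-- The image of `H_j = H ∩ G_j` in the quotient `G_j/G_{j+1}`. -/
def relImage (H : Subgroup G) (j : ℕ) : Subgroup (lcsQuot G j) :=
  Subgroup.map (QuotientGroup.mk' _)
    ((H ⊓ (⊤ : Subgroup G).lowerCentralSeries j).subgroupOf ((⊤ : Subgroup G).lowerCentralSeries j))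

/-- The word norm of an element with respect to a finite generating set. -/
noncomputable def wordNorm {A : Type*} [Group A] (T : Finset A) (a : A) : ℕ :=
  sInf {n : ℕ | a ∈ wordBall T n}


lemma finite_wordBall (S : Finset G) (n : ℕ) : (wordBall S n).Finite := by
  induction n with
  | zero =>
    refine Set.Finite.subset (Set.finite_singleton 1) ?_
    rintro g ⟨l, hl, -, hp⟩
    simp only [Nat.le_zero, List.length_eq_zero_iff] at hl
    subst hl
    simp [← hp]
  | succ n ih =>
    have hsub : wordBall S (n + 1) ⊆
        wordBall S n ∪ ⋃ x ∈ ((S : Set G) ∪ (S : Set G)⁻¹), (x * ·) '' wordBall S n := by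
      rintro g ⟨l, hl, hmem, hp⟩
      cases l with
      | nil => exact Or.inl ⟨[], by simp, by simp, hp⟩
      | cons x t =>
        right
        have hx : x ∈ ((S : Set G) ∪ (S : Set G)⁻¹) := by
          rcases hmem x List.mem_cons_self with h | h
          · exact Or.inl h
          · exact Or.inr (Set.mem_inv.2 h)
        have ht : t.prod ∈ wordBall S n :=
          ⟨t, by simpa using Nat.succ_le_succ_iff.mp hl,
            fun y hy => hmem y (List.mem_cons_of_mem x hy), rfl⟩
        exact Set.mem_biUnion hx ⟨t.prod, ht, by simpa using hp⟩
    refine Set.Finite.subset (ih.union ?_) hsub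
    exact Set.Finite.biUnion (S.finite_toSet.union (S.finite_toSet.inv)) fun x _ => ih.image _

lemma mul_mem_wordBall {S : Finset G} {m n : ℕ} {a b : G}
    (ha : a ∈ wordBall S m) (hb : b ∈ wordBall S n) : a * b ∈ wordBall S (m + n) := by
  obtain ⟨l₁, hl₁, hm₁, hp₁⟩ := ha
  obtain ⟨l₂, hl₂, hm₂, hp₂⟩ := hb
  refine ⟨l₁ ++ l₂, by simpa using Nat.add_le_add hl₁ hl₂, ?_, by simp [hp₁, hp₂]⟩
  intro x hx
  rcases List.mem_append.1 hx with h | h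
  · exact hm₁ x h
  · exact hm₂ x h

lemma inv_mem_wordBall {S : Finset G} {n : ℕ} {a : G}
    (ha : a ∈ wordBall S n) : a⁻¹ ∈ wordBall S n := by
  obtain ⟨l, hl, hm, hp⟩ := ha
  refine ⟨(l.map fun x => x⁻¹).reverse, by simpa using hl, ?_, ?_⟩
  · intro x hx
    simp only [List.mem_reverse, List.mem_map] at hx
    obtain ⟨y, hy, rfl⟩ := hx
    simpa [or_comm] using hm y hy
  · rw [← hp, List.prod_reverse_noncomm]
    simp [List.map_map, Function.comp]

/-- **Ball counting inequalities.** For any subgroup `H` of a group `G` with a fixed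
finite generating set: `#B_{2n}^G(e) ≥ #B_n^{G/H} · #(B_n^G(e) ∩ H)` and
`#B_n^G(e) ≤ #B_n^{G/H} · #(B_{2n}^G(e) ∩ H)`. -/
theorem ball_counting_inequalities
    {G : Type*} [Group G]
    (S : Finset G) (hS : Subgroup.closure (S : Set G) = ⊤)
    (H : Subgroup G) (n : ℕ) :
    (schreierBall S H n).ncard * (wordBall S n ∩ (H : Set G)).ncard
        ≤ (wordBall S (2 * n)).ncard ∧
    (wordBall S n).ncard
        ≤ (schreierBall S H n).ncard * (wordBall S (2 * n) ∩ (H : Set G)).ncard := by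
  classical
  -- choose a representative in the ball for each element of the Schreier ball
  have hrep : ∀ q : G ⧸ H, ∃ g : G, q ∈ schreierBall S H n →
      g ∈ wordBall S n ∧ (QuotientGroup.mk g : G ⧸ H) = q := by
    intro q
    by_cases hq : q ∈ schreierBall S H n
    · obtain ⟨g, hg, hgq⟩ := hq
      exact ⟨g, fun _ => ⟨hg, hgq⟩⟩
    · exact ⟨1, fun h => absurd h hq⟩
  choose r hr using hrep
  have hBfin : (wordBall S n).Finite := finite_wordBall S n
  have hB2fin : (wordBall S (2 * n)).Finite := finite_wordBall S (2 * n)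
  have hSfin : (schreierBall S H n).Finite := hBfin.image _
  have key : ∀ (A : Set (G ⧸ H)) (B : Set G), A.Finite → B.Finite →
      (A ×ˢ B).ncard = A.ncard * B.ncard := by
    intro A B hA hB
    have := Nat.card_congr (Equiv.Set.prod A B)
    simpa [Set.ncard_eq_toFinset_card', Nat.card_coe_set_eq, Nat.card_prod] using this
  constructor
  · -- map (q, h) ↦ r q * h injectively into the big ball
    have hcard := key (schreierBall S H n) (wordBall S n ∩ (H : Set G)) hSfin
      (hBfin.inter_of_left _)
    rw [← hcard]
    refine Set.ncard_le_ncard_of_injOn (fun p => r p.1 * p.2) ?_ ?_ hB2fin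
    · rintro ⟨q, h⟩ ⟨hq, hh1, hh2⟩
      have := (hr q hq).1
      have h2 : (2 : ℕ) * n = n + n := by ring
      rw [h2]
      exact mul_mem_wordBall this hh1
    · rintro ⟨q₁, h₁⟩ ⟨hq₁, hh₁, hH₁⟩ ⟨q₂, h₂⟩ ⟨hq₂, hh₂, hH₂⟩ heq
      simp only at heq
      have hm₁ : (QuotientGroup.mk (r q₁ * h₁) : G ⧸ H) = q₁ := by
        rw [QuotientGroup.mk_mul_of_mem _ hH₁, (hr q₁ hq₁).2]
      have hm₂ : (QuotientGroup.mk (r q₂ * h₂) : G ⧸ H) = q₂ := by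
        rw [QuotientGroup.mk_mul_of_mem _ hH₂, (hr q₂ hq₂).2]
      have hq : q₁ = q₂ := by rw [← hm₁, ← hm₂, heq]
      subst hq
      have : h₁ = h₂ := by
        have := mul_left_cancel heq
        exact this
      simp [this]
  · -- map g ↦ (mk g, (r (mk g))⁻¹ * g) injectively
    have hcard := key (schreierBall S H n) (wordBall S (2 * n) ∩ (H : Set G)) hSfin
      (hB2fin.inter_of_left _)
    rw [← hcard]
    refine Set.ncard_le_ncard_of_injOn
      (fun g => ((QuotientGroup.mk g : G ⧸ H), (r (QuotientGroup.mk g))⁻¹ * g)) ?_ ?_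
      (hSfin.prod (hB2fin.inter_of_left _))
    · intro g hg
      have hq : (QuotientGroup.mk g : G ⧸ H) ∈ schreierBall S H n := ⟨g, hg, rfl⟩
      refine ⟨hq, ?_, ?_⟩
      · have h2 : (2 : ℕ) * n = n + n := by ring
        rw [h2]
        exact mul_mem_wordBall (inv_mem_wordBall (hr _ hq).1) hg
      · show (r (QuotientGroup.mk g))⁻¹ * g ∈ H
        exact QuotientGroup.eq.mp ((hr _ hq).2)
    · intro g₁ hg₁ g₂ hg₂ heq
      simp only [Prod.mk.injEq] at heq
      obtain ⟨h1, h2⟩ := heq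
      rw [h1] at h2
      exact mul_left_cancel h2


end NilpotentCritReg
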